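/- Let F be a field of characteristic 2, let n ≥ 1, and let (x_1, …, x_n) ∈ F^n be additive input shares of x = x_1 + ⋯ + x_n. Run the B2M conversion: initialize m_1 := x_1; for j = 2, …, n choose any nonzero m_j ∈ F^×, set m_1 := m_1 · m_j, then for k = 2, …, n−j+1 choose any r_{j,k} ∈ F and update x_k := m_j·x_k + r_{j,k}, m_1 := m_1 + x_k, x_k := r_{j,k}; afterwards set x_{n−j+2} := m_j · x_{n−j+2}, m_1 := m_1 + x_{n−j+2}, and finally replace m_j by its multiplicative inverse m_j^{-1}. Then, for every choice of the nonzero values m_2, …, m_n and of the randomness r_{j,k}, the algorithm's output (m_1, m_2, …, m_n) satisfies m_1 · m_2 ⋯ m_n = x. (Functional correctness of the Boolean-to-multiplicative mask conversion: the product of the output shares equals the sum of the input shares.) -/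

import Mathlib

/-- Inner loop of the B2M conversion for a fixed outer index `j`, with multiplicative
share `mj` and randomness `r`.  The state is the pair `(m₁, x)` consisting of the
accumulator share and the remaining additive shares.  For each `k` in `ks` it performs
`x k := mj * x k + r k;  m₁ := m₁ + x k;  x k := r k`. -/
def B2Minner {F : Type*} [Field F] (mj : F) (r : ℕ → F)
    (st : F × (ℕ → F)) (ks : List ℕ) : F × (ℕ → F) :=
  ks.foldl (fun st k =>
    (st.1 + (mj * st.2 k + r k), Function.update st.2 k (r k))) st

/-- One outer iteration (index `j`) of the B2M conversion:
`m₁ := m₁ * m j`; then the inner loop over `k = 2, …, n − j + 1`; then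
`x_{n−j+2} := m j * x_{n−j+2};  m₁ := m₁ + x_{n−j+2}`. -/
def B2Mstep {F : Type*} [Field F] (n : ℕ) (m : ℕ → F) (r : ℕ → ℕ → F)
    (st : F × (ℕ → F)) (j : ℕ) : F × (ℕ → F) :=
  let st1 : F × (ℕ → F) := (st.1 * m j, st.2)
  let st2 := B2Minner (m j) (r j) st1 (List.range' 2 (n - j))
  (st2.1 + m j * st2.2 (n - j + 2), st2.2)

/-- The Genelle–Prouff–Quisquater Boolean-to-multiplicative conversion (Algorithm B2M):
initialize `m₁ := x 1` and run the outer loop for `j = 2, …, n`.  It returns the final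
value of `m₁` (together with the final additive-share state); the remaining output
shares are the inverses `(m j)⁻¹` for `j = 2, …, n`. -/
def B2M {F : Type*} [Field F] (n : ℕ) (x : ℕ → F) (m : ℕ → F) (r : ℕ → ℕ → F) :
    F × (ℕ → F) :=
  (List.range' 2 (n - 1)).foldl (B2Mstep n m r) (x 1, x)

section aux
variable {F : Type*} [Field F]

lemma sum_map_add' (f g : ℕ → F) (l : List ℕ) :
    (l.map (fun k => f k + g k)).sum = (l.map f).sum + (l.map g).sum := by
  induction l with
  | nil => simp
  | cons a l ih => simp [ih]; ring

lemma sum_map_mul_left' (c : F) (f : ℕ → F) (l : List ℕ) :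
    (l.map (fun k => c * f k)).sum = c * (l.map f).sum := by
  induction l with
  | nil => simp
  | cons a l ih => simp [ih]; ring


lemma prod_mul_prod_inv (m : ℕ → F) (l : List ℕ) (hmem : ∀ j ∈ l, m j ≠ 0) :
    (l.map m).prod * (l.map (fun j => (m j)⁻¹)).prod = 1 := by
  induction l with
  | nil => simp
  | cons a l ih =>
    simp only [List.map_cons, List.prod_cons]
    have ha : m a ≠ 0 := hmem a List.mem_cons_self
    have h2 := ih (fun j hj => hmem j (List.mem_cons_of_mem a hj))
    calc m a * (l.map m).prod * ((m a)⁻¹ * (l.map (fun j => (m j)⁻¹)).prod)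
        = (m a * (m a)⁻¹) * ((l.map m).prod * (l.map (fun j => (m j)⁻¹)).prod) := by ring
      _ = 1 := by rw [mul_inv_cancel₀ ha, h2, one_mul]

lemma inner_snd_not_mem (mj : F) (r : ℕ → F) (st : F × (ℕ → F)) (ks : List ℕ) {k' : ℕ}
    (h : k' ∉ ks) : (B2Minner mj r st ks).2 k' = st.2 k' := by
  induction ks generalizing st with
  | nil => rfl
  | cons a l ih =>
    simp only [List.mem_cons, not_or] at h
    rw [show B2Minner mj r st (a :: l)
        = B2Minner mj r (st.1 + (mj * st.2 a + r a), Function.update st.2 a (r a)) l from rfl,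
      ih _ h.2]
    exact Function.update_of_ne h.1 _ _

lemma inner_snd_mem (mj : F) (r : ℕ → F) (st : F × (ℕ → F)) (ks : List ℕ) {k : ℕ}
    (hnd : ks.Nodup) (h : k ∈ ks) : (B2Minner mj r st ks).2 k = r k := by
  induction ks generalizing st with
  | nil => simp at h
  | cons a l ih =>
    rw [List.nodup_cons] at hnd
    rw [show B2Minner mj r st (a :: l)
        = B2Minner mj r (st.1 + (mj * st.2 a + r a), Function.update st.2 a (r a)) l from rfl]
    rcases List.mem_cons.mp h with h | h
    · subst h
      rw [inner_snd_not_mem _ _ _ _ hnd.1]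
      simp
    · exact ih _ hnd.2 h

lemma inner_fst (mj : F) (r : ℕ → F) (st : F × (ℕ → F)) (ks : List ℕ)
    (hnd : ks.Nodup) :
    (B2Minner mj r st ks).1 = st.1 + (ks.map (fun k => mj * st.2 k + r k)).sum := by
  induction ks generalizing st with
  | nil => simp [B2Minner]
  | cons a l ih =>
    rw [List.nodup_cons] at hnd
    rw [show B2Minner mj r st (a :: l)
        = B2Minner mj r (st.1 + (mj * st.2 a + r a), Function.update st.2 a (r a)) l from rfl,
      ih _ hnd.2]
    simp only [List.map_cons, List.sum_cons]
    have : (l.map (fun k => mj * Function.update st.2 a (r a) k + r k))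
        = l.map (fun k => mj * st.2 k + r k) := by
      apply List.map_congr_left
      intro k hk
      rw [Function.update_of_ne (by rintro rfl; exact hnd.1 hk)]
    rw [this]; ring

variable [CharP F 2]

lemma step_key (n : ℕ) (m : ℕ → F) (r : ℕ → ℕ → F) (st : F × (ℕ → F)) (j : ℕ) :
    (B2Mstep n m r st j).1
      + ((List.range' 2 (n - j)).map (B2Mstep n m r st j).2).sum
    = m j * (st.1 + ((List.range' 2 (n - j + 1)).map st.2).sum) := by
  set d := n - j with hd
  have hnd : (List.range' 2 d).Nodup := List.nodup_range' ..
  have hnot : (d + 2) ∉ List.range' 2 d := by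
    intro h; rw [List.mem_range'_1] at h; omega
  have h2 : (2 : F) = 0 := by exact_mod_cast CharP.cast_eq_zero F 2
  simp only [B2Mstep]
  rw [inner_fst _ _ _ _ hnd]
  have hsnd : ((List.range' 2 d).map
      (B2Minner (m j) (r j) (st.1 * m j, st.2) (List.range' 2 d)).2).sum
      = ((List.range' 2 d).map (r j)).sum := by
    congr 1
    apply List.map_congr_left
    intro k hk
    exact inner_snd_mem _ _ _ _ hnd hk
  rw [hsnd, show n - j + 2 = d + 2 from rfl,
    inner_snd_not_mem _ _ _ _ hnot]
  rw [show n - j + 1 = d + 1 from rfl, List.range'_concat,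
    show 2 + 1 * d = d + 2 by omega, List.map_append, List.sum_append]
  rw [sum_map_add' (fun k => m j * st.2 k) (r j), sum_map_mul_left']
  simp only [List.map_cons, List.map_nil, List.sum_cons, List.sum_nil]
  linear_combination ((List.range' 2 d).map (r j)).sum * h2

lemma main_inv (n : ℕ) (x m : ℕ → F) (r : ℕ → ℕ → F) (t : ℕ) (ht : t ≤ n - 1) (hn : 1 ≤ n) :
    ((List.range' 2 t).foldl (B2Mstep n m r) (x 1, x)).1
      + ((List.range' 2 (n - 1 - t)).map
          ((List.range' 2 t).foldl (B2Mstep n m r) (x 1, x)).2).sum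
    = ((List.range' 2 t).map m).prod * (x 1 + ((List.range' 2 (n - 1)).map x).sum) := by
  induction t with
  | zero => simp
  | succ t iht =>
    have ht' : t ≤ n - 1 := by omega
    rw [List.range'_concat, show 2 + 1 * t = 2 + t by omega, List.foldl_append,
      List.foldl_cons, List.foldl_nil, List.map_append, List.prod_append]
    set st := (List.range' 2 t).foldl (B2Mstep n m r) (x 1, x) with hst
    have e1 : n - 1 - (t + 1) = n - (2 + t) := by omega
    have e2 : n - 1 - t = n - (2 + t) + 1 := by omega
    rw [e1, step_key n m r st (2 + t)]
    rw [← e2, iht ht']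
    simp only [List.map_cons, List.map_nil, List.prod_cons, List.prod_nil]
    ring

end aux


/-- **Functional correctness of the B2M Boolean-to-multiplicative mask conversion.**
Over a field of characteristic 2, for every choice of the nonzero values
`m 2, …, m n` and of the randomness `r`, the output shares
`((B2M n x m r).1, (m 2)⁻¹, …, (m n)⁻¹)` satisfy: their product equals the sum
`x 1 + ⋯ + x n` of the input shares. -/
theorem stmt_4 (F : Type*) [Field F] [CharP F 2] (n : ℕ) (hn : 1 ≤ n)
    (x m : ℕ → F) (r : ℕ → ℕ → F)
    (hm : ∀ j, 2 ≤ j → j ≤ n → m j ≠ 0) :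
    (B2M n x m r).1 * ∏ j ∈ Finset.Icc 2 n, (m j)⁻¹
      = ∑ i ∈ Finset.Icc 1 n, x i := by
  have key := main_inv n x m r (n - 1) le_rfl hn
  rw [Nat.sub_self] at key
  simp only [List.range'_zero, List.map_nil, List.sum_nil, add_zero] at key
  have hB : (B2M n x m r).1
      = ((List.range' 2 (n - 1)).map m).prod * (x 1 + ((List.range' 2 (n - 1)).map x).sum) := key
  have hprod : ∏ j ∈ Finset.Icc 2 n, (m j)⁻¹
      = ((List.range' 2 (n - 1)).map (fun j => (m j)⁻¹)).prod := by
    rw [Nat.Icc_eq_range', show n + 1 - 2 = n - 1 from rfl]; rfl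
  have hsum : ∑ i ∈ Finset.Icc 1 n, x i = ((List.range' 1 n).map x).sum := by
    rw [Nat.Icc_eq_range', show n + 1 - 1 = n from rfl]; rfl
  have hrange : List.range' 1 n = 1 :: List.range' 2 (n - 1) := by
    conv_lhs => rw [show n = (n - 1) + 1 by omega]
    rw [List.range'_succ]
  have hinv : ((List.range' 2 (n - 1)).map m).prod
      * ((List.range' 2 (n - 1)).map (fun j => (m j)⁻¹)).prod = 1 :=
    prod_mul_prod_inv m _ (by
      intro j hj
      rw [List.mem_range'_1] at hj
      exact hm j hj.1 (by omega))
  rw [hB, hprod, hsum, hrange]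
  simp only [List.map_cons, List.sum_cons]
  calc ((List.range' 2 (n-1)).map m).prod * (x 1 + ((List.range' 2 (n-1)).map x).sum)
      * ((List.range' 2 (n-1)).map (fun j => (m j)⁻¹)).prod
      = (((List.range' 2 (n-1)).map m).prod * ((List.range' 2 (n-1)).map (fun j => (m j)⁻¹)).prod)
        * (x 1 + ((List.range' 2 (n-1)).map x).sum) := by ring
    _ = x 1 + ((List.range' 2 (n-1)).map x).sum := by rw [hinv, one_mul]
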